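/- arXiv:1511.09126 — 2 statements merged into one kernel-verified Lean document; each statement's English description precedes it below -/
import Mathlib

section
/- Let p be a prime and X a subset of 𝔽_p with 3 ≤ |X| ≤ p − 5. Suppose X = r([x,y] \ {z}) for some x, y, z, r ∈ 𝔽_p. If there are x', y', z', r' ∈ 𝔽_p such that X = r'([x',y'] \ {z'}), then r' ∈ {r, −r}. -/
open scoped Pointwise

/-- The interval `[x,y]` in `ZMod p`: `{x, x+1, …, x+i}` where `i ∈ {0,…,p-1}`
reduces to `y - x` mod `p`. -/
def itv {p : ℕ} (x y : ZMod p) : Finset (ZMod p) :=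
  (Finset.range ((y - x).val + 1)).image (fun i : ℕ => x + (i : ZMod p))

section Stmt3Aux

open Finset

variable {p : ℕ}

lemma mem_itv [NeZero p] {x y a : ZMod p} :
    a ∈ itv x y ↔ (a - x).val ≤ (y - x).val := by
  constructor
  · rintro h
    simp only [itv, Finset.mem_image, Finset.mem_range] at h
    obtain ⟨i, hi, rfl⟩ := h
    have h2 : (x + ↑i - x) = (i : ZMod p) := by ring
    have hv := ZMod.val_lt (y - x)
    rw [h2, ZMod.val_cast_of_lt (by omega)]
    omega
  · intro h
    simp only [itv, Finset.mem_image, Finset.mem_range]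
    refine ⟨(a - x).val, by omega, ?_⟩
    simp [ZMod.natCast_val, ZMod.cast_id]

lemma card_itv [NeZero p] (x y : ZMod p) :
    (itv x y).card = (y - x).val + 1 := by
  rw [itv, Finset.card_image_of_injOn, Finset.card_range]
  intro i hi j hj hij
  simp only [coe_range, Set.mem_Iio] at hi hj
  have hv := ZMod.val_lt (y - x)
  have h1 : (i : ZMod p) = (j : ZMod p) := add_left_cancel hij
  have := congrArg ZMod.val h1
  rwa [ZMod.val_cast_of_lt (by omega), ZMod.val_cast_of_lt (by omega)] at this

/-- Key counting lemma: if a punctured interval `A` of size `n`, `3 ≤ n ≤ p-5`,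
satisfies `|{a ∈ A : a+s ∈ A}| ≥ n - 2`, then `s` is within 3 of `0`. -/
lemma key_lemma [NeZero p] (x y z s : ZMod p)
    (hn3 : 3 ≤ ((itv x y).erase z).card)
    (hn5 : ((itv x y).erase z).card + 5 ≤ p)
    (hf : ((itv x y).erase z).card ≤
      (((itv x y).erase z).filter (fun a => a + s ∈ (itv x y).erase z)).card + 2) :
    s.val ≤ 3 ∨ p ≤ s.val + 3 := by
  by_contra hcon
  push_neg at hcon
  obtain ⟨hm1, hm2⟩ := hcon
  set m := s.val with hm
  set v := (y - x).val with hv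
  set I := itv x y with hI
  set A := I.erase z with hA
  set n := A.card with hn
  have hcardI : I.card = v + 1 := card_itv x y
  have hvlt : v < p := ZMod.val_lt (y - x)
  have hmlt : m < p := ZMod.val_lt s
  have hln : v ≤ n := by
    have h := Finset.pred_card_le_card_erase (s := I) (a := z)
    rw [← hA] at h
    omega
  have hsub : (A.filter (fun a => a + s ∈ A)).card ≤
      (I.filter (fun a => a + s ∈ I)).card := by
    apply Finset.card_le_card
    intro a ha
    simp only [Finset.mem_filter, hA, Finset.mem_erase] at ha ⊢
    exact ⟨ha.1.2, ha.2.2⟩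
  have hbound : (I.filter (fun a => a + s ∈ I)).card ≤
      ((v + 1) - m) + ((v + 1) - (p - m)) := by
    have := Finset.card_le_card_of_injOn (fun a => (a - x).val)
      (s := I.filter (fun a => a + s ∈ I))
      (t := (Finset.range ((v+1) - m)) ∪ (Finset.Ico (p - m) (v+1)))
      (by
        intro a ha
        simp only [Finset.mem_coe, Finset.mem_filter, hI, mem_itv] at ha
        obtain ⟨h1, h2⟩ := ha
        have hval : (a + s - x).val = ((a - x).val + m) % p := by
          have : a + s - x = (a - x) + s := by ring
          rw [this, ZMod.val_add]
        set i := (a - x).val with hi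
        have hip : i < p := ZMod.val_lt (a - x)
        rw [hval] at h2
        simp only [Finset.mem_coe, Finset.mem_union, Finset.mem_range, Finset.mem_Ico]
        rcases Nat.lt_or_ge (i + m) p with hc | hc
        · left; rw [Nat.mod_eq_of_lt hc] at h2; omega
        · right; omega)
      (by
        intro a ha b hb hab
        simp only [Finset.coe_filter, Set.mem_setOf_eq] at ha hb
        have h1 := ZMod.val_injective p hab
        have h2 : a - x + x = b - x + x := by rw [h1]
        simpa using h2)
    calc (I.filter (fun a => a + s ∈ I)).card
        ≤ ((Finset.range ((v+1) - m)) ∪ (Finset.Ico (p - m) (v+1))).card := this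
      _ ≤ ((v + 1) - m) + ((v + 1) - (p - m)) := by
          refine le_trans (Finset.card_union_le _ _) ?_
          rw [Finset.card_range, Nat.card_Ico]
  omega

/-- Lower bound: a punctured interval `B` has at least `|B| - 2` elements `a`
with `a+1 ∈ B`. -/
lemma lb_lemma [NeZero p] (x y z : ZMod p) :
    ((itv x y).erase z).card ≤
      (((itv x y).erase z).filter (fun a => a + 1 ∈ (itv x y).erase z)).card + 2 := by
  set v := (y - x).val with hv
  set I := itv x y with hI
  set B := I.erase z with hB
  have hvlt : v < p := ZMod.val_lt (y - x)
  have hcardI : I.card = v + 1 := card_itv x y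
  set S : Finset (ZMod p) := (Finset.range v).image (fun i : ℕ => x + (i : ZMod p)) with hS
  have hScard : S.card = v := by
    rw [hS, Finset.card_image_of_injOn, Finset.card_range]
    intro i hi j hj hij
    simp only [coe_range, Set.mem_Iio] at hi hj
    have h1 : (i : ZMod p) = (j : ZMod p) := add_left_cancel hij
    have := congrArg ZMod.val h1
    rwa [ZMod.val_cast_of_lt (by omega), ZMod.val_cast_of_lt (by omega)] at this
  have hSI : ∀ a ∈ S, a ∈ I ∧ a + 1 ∈ I := by
    intro a ha
    simp only [hS, Finset.mem_image, Finset.mem_range] at ha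
    obtain ⟨i, hi, rfl⟩ := ha
    constructor
    · rw [hI, mem_itv]
      have : (x + ↑i - x) = (i : ZMod p) := by ring
      rw [this, ZMod.val_cast_of_lt (by omega)]; omega
    · rw [hI, mem_itv]
      have : (x + ↑i + 1 - x) = ((i + 1 : ℕ) : ZMod p) := by push_cast; ring
      rw [this, ZMod.val_cast_of_lt (by omega)]; omega
  by_cases hz : z ∈ I
  · have hBcard : B.card = v := by
      rw [hB, Finset.card_erase_of_mem hz, hcardI]; omega
    have hsub : (S.erase z).erase (z - 1) ⊆ B.filter (fun a => a + 1 ∈ B) := by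
      intro a ha
      have ha1 : a ≠ z - 1 := (Finset.mem_erase.mp ha).1
      have ha2 : a ≠ z := (Finset.mem_erase.mp (Finset.mem_erase.mp ha).2).1
      have ha3 : a ∈ S := (Finset.mem_erase.mp (Finset.mem_erase.mp ha).2).2
      obtain ⟨hmem, hmem1⟩ := hSI a ha3
      simp only [Finset.mem_filter, hB, Finset.mem_erase]
      refine ⟨⟨ha2, hmem⟩, ?_, hmem1⟩
      intro hc; exact ha1 (by rw [← hc]; ring)
    have hc1 := Finset.card_le_card hsub
    have hc2 : S.card - 1 ≤ (S.erase z).card := Finset.pred_card_le_card_erase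
    have hc3 : (S.erase z).card - 1 ≤ ((S.erase z).erase (z-1)).card :=
      Finset.pred_card_le_card_erase
    omega
  · have hBI : B = I := by rw [hB, Finset.erase_eq_of_notMem hz]
    have hBcard : B.card = v + 1 := by rw [hBI, hcardI]
    have hsub : S ⊆ B.filter (fun a => a + 1 ∈ B) := by
      intro a ha
      obtain ⟨hmem, hmem1⟩ := hSI a ha
      simp only [Finset.mem_filter, hBI]
      exact ⟨hmem, hmem1⟩
    have hc1 := Finset.card_le_card hsub
    omega

/-- Dilating a set scales the shift in the pair count. -/
lemma filt_image (hp : p.Prime) (t s : ZMod p) (ht : t ≠ 0) (S : Finset (ZMod p)) :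
    ((S.image (fun a => t * a)).filter
      (fun a => a + t * s ∈ S.image (fun a => t * a))).card =
    (S.filter (fun a => a + s ∈ S)).card := by
  haveI := Fact.mk hp
  rw [Finset.filter_image]
  rw [Finset.card_image_of_injective _ (mul_right_injective₀ ht)]
  congr 1
  apply Finset.filter_congr
  intro a _
  constructor
  · intro h
    simp only [Finset.mem_image] at h
    obtain ⟨b, hb, hbe⟩ := h
    have h2 : t * b = t * (a + s) := by rw [hbe]; ring
    have h3 := mul_left_cancel₀ ht h2
    rwa [← h3]
  · intro h
    simp only [Finset.mem_image]
    exact ⟨a + s, h, by ring⟩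

lemma rep_lemma [NeZero p] (v : ZMod p) (h : v.val ≤ 3 ∨ p ≤ v.val + 3) :
    ∃ a : ℕ, a ≤ 3 ∧ (v = (a : ZMod p) ∨ v = -(a : ZMod p)) := by
  have hvp : v.val < p := ZMod.val_lt v
  have hcast : ((v.val : ℕ) : ZMod p) = v := by
    simp [ZMod.natCast_val, ZMod.cast_id]
  rcases h with h | h
  · exact ⟨v.val, h, Or.inl hcast.symm⟩
  · refine ⟨p - v.val, by omega, Or.inr ?_⟩
    have h0 : ((v.val + (p - v.val) : ℕ) : ZMod p) = 0 := by
      rw [show v.val + (p - v.val) = p from by omega]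
      exact ZMod.natCast_self p
    push_cast at h0
    rw [hcast] at h0
    linear_combination h0

lemma arith_lemma (hp : p.Prime) (hp11 : 11 ≤ p) (v w : ZMod p) (hvw : v * w = 1)
    (hv : v.val ≤ 3 ∨ p ≤ v.val + 3) (hw : w.val ≤ 3 ∨ p ≤ w.val + 3) :
    v = 1 ∨ v = -1 := by
  haveI : NeZero p := ⟨by omega⟩
  obtain ⟨a, ha3, hva⟩ := rep_lemma v hv
  obtain ⟨b, hb3, hwb⟩ := rep_lemma w hw
  have hab : a * b ≤ 9 := by nlinarith
  have hsame : ((a * b : ℕ) : ZMod p) = 1 → v = 1 ∨ v = -1 := by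
    intro h1
    have h2 : ((a * b : ℕ) : ZMod p) = ((1 : ℕ) : ZMod p) := by rwa [Nat.cast_one]
    have h3 := (ZMod.natCast_eq_natCast_iff _ _ _).mp h2
    have h4 : a * b % p = 1 % p := h3
    rw [Nat.mod_eq_of_lt (by omega), Nat.mod_eq_of_lt (by omega)] at h4
    have ha1 : a = 1 := Nat.eq_one_of_mul_eq_one_right h4
    rcases hva with h | h
    · left; rw [h, ha1, Nat.cast_one]
    · right; rw [h, ha1, Nat.cast_one]
  have hdiff : ((a * b : ℕ) : ZMod p) = -1 → False := by
    intro h1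
    have h2 : ((a * b + 1 : ℕ) : ZMod p) = 0 := by
      rw [Nat.cast_mul] at h1; push_cast; linear_combination h1
    have h3 := (ZMod.natCast_eq_zero_iff _ _).mp h2
    have := Nat.le_of_dvd (by omega) h3
    omega
  rcases hva with h | h <;> rcases hwb with h' | h'
  · apply hsame; rw [Nat.cast_mul, ← h, ← h']; exact hvw
  · exfalso; apply hdiff; rw [Nat.cast_mul]; rw [h, h'] at hvw; linear_combination -hvw
  · exfalso; apply hdiff; rw [Nat.cast_mul]; rw [h, h'] at hvw; linear_combination -hvw
  · apply hsame; rw [Nat.cast_mul]; rw [h, h'] at hvw; linear_combination hvw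

/-- From equality of two dilations, express one set as a dilation of the other. -/
lemma img_eq (hp : p.Prime) {S T : Finset (ZMod p)} {c d : ZMod p}
    (hc : c ≠ 0) (hd : d ≠ 0)
    (h : S.image (fun a => c * a) = T.image (fun a => d * a)) :
    T = S.image (fun a => (d⁻¹ * c) * a) := by
  haveI := Fact.mk hp
  have h1 : (T.image (fun a => d * a)).image (fun a => d⁻¹ * a) = T := by
    rw [Finset.image_image]
    have : ((fun a => d⁻¹ * a) ∘ (fun a => d * a)) = id := by
      funext a; simp [← mul_assoc, inv_mul_cancel₀ hd]
    rw [this, Finset.image_id]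
  rw [← h1, ← h, Finset.image_image]
  congr 1
  funext a
  simp [mul_assoc]

end Stmt3Aux

theorem stmt_3 (p : ℕ) (hp : p.Prime) (X : Finset (ZMod p))
    (h3 : 3 ≤ X.card) (h5 : X.card ≤ p - 5)
    (x y z r : ZMod p) (hX : X = r • ((itv x y).erase z))
    (x' y' z' r' : ZMod p) (hX' : X = r' • ((itv x' y').erase z')) :
    r' = r ∨ r' = -r := by
  haveI := Fact.mk hp
  haveI : NeZero p := ⟨hp.pos.ne'⟩
  rw [Finset.smul_finset_def] at hX hX'
  simp only [smul_eq_mul] at hX hX'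
  set A := (itv x y).erase z with hA
  set B := (itv x' y').erase z' with hB
  have hp8 : 8 ≤ p := by omega
  have hp11 : 11 ≤ p := by
    by_contra hcon
    push_neg at hcon
    interval_cases p <;> norm_num at hp
  -- r and r' are nonzero
  have hr : r ≠ 0 := by
    rintro rfl
    have hle : X.card ≤ 1 := by
      apply Finset.card_le_one.mpr
      intro a ha b hb
      rw [hX] at ha hb
      simp only [Finset.mem_image] at ha hb
      obtain ⟨_, _, rfl⟩ := ha
      obtain ⟨_, _, rfl⟩ := hb
      simp
    omega
  have hr' : r' ≠ 0 := by
    rintro rfl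
    have hle : X.card ≤ 1 := by
      apply Finset.card_le_one.mpr
      intro a ha b hb
      rw [hX'] at ha hb
      simp only [Finset.mem_image] at ha hb
      obtain ⟨_, _, rfl⟩ := ha
      obtain ⟨_, _, rfl⟩ := hb
      simp
    omega
  have hcardA : A.card = X.card := by
    rw [hX]; exact (Finset.card_image_of_injective _ (mul_right_injective₀ hr)).symm
  have hcardB : B.card = X.card := by
    rw [hX']; exact (Finset.card_image_of_injective _ (mul_right_injective₀ hr')).symm
  set u := r'⁻¹ * r with hu
  have hune : u ≠ 0 := mul_ne_zero (inv_ne_zero hr') hr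
  have hBA : B = A.image (fun a => u * a) :=
    img_eq hp hr hr' (by rw [← hX, ← hX'])
  have hAB : A = B.image (fun a => u⁻¹ * a) := by
    have := img_eq hp hr' hr (by rw [← hX, ← hX'])
    rw [this]
    congr 1
    funext a
    congr 1
    rw [hu, mul_inv_rev, inv_inv]
  -- number of n+5 ≤ p
  have hn5 : X.card + 5 ≤ p := by omega
  -- B-side pair count gives that A has many pairs at distance u⁻¹
  have hkey1 : (u⁻¹).val ≤ 3 ∨ p ≤ (u⁻¹).val + 3 := by
    apply key_lemma x y z (u⁻¹) (by rw [← hA]; omega) (by rw [← hA]; omega)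
    have hlb := lb_lemma (p := p) x' y' z'
    rw [← hB] at hlb
    have hfi := filt_image hp u u⁻¹ hune A
    rw [mul_inv_cancel₀ hune, ← hBA] at hfi
    rw [← hA]
    omega
  have hkey2 : u.val ≤ 3 ∨ p ≤ u.val + 3 := by
    apply key_lemma x' y' z' u (by rw [← hB]; omega) (by rw [← hB]; omega)
    have hlb := lb_lemma (p := p) x y z
    rw [← hA] at hlb
    have hfi := filt_image hp u⁻¹ u (inv_ne_zero hune) B
    rw [inv_mul_cancel₀ hune, ← hAB] at hfi
    rw [← hB]
    omega
  have harith := arith_lemma hp hp11 u u⁻¹ (mul_inv_cancel₀ hune) hkey2 hkey1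
  rcases harith with h1 | h1
  · left
    have : r' * u = r' * 1 := by rw [h1]
    rw [hu, ← mul_assoc, mul_inv_cancel₀ hr', one_mul, mul_one] at this
    exact this.symm ▸ rfl
  · right
    have : r' * u = r' * (-1) := by rw [h1]
    rw [hu, ← mul_assoc, mul_inv_cancel₀ hr', one_mul] at this
    rw [this]; ring
end

section
/- Let p be a prime, n ≥ 1, and let x_1,…,x_n, y_1,…,y_n ∈ 𝔽_p and r ∈ 𝔽_p^* be such that for all i ≠ j the sets r[x_i,y_i] and r[x_j−1, y_j+1] are disjoint. Let x, y ∈ 𝔽_p with |[x,y]| ≥ 2 and set X := ⋃_{i=1}^n r[x_i,y_i]. Then |X + r[x,y]| ≥ min{p, |X| + |[x,y]| + n − 2}. -/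
open scoped Pointwise

namespace StmtAux

open Finset

variable {p : ℕ}

/-- The segment starting at `c` of nominal length `m`. -/
def seg (c : ZMod p) (m : ℕ) : Finset (ZMod p) :=
  (Finset.range m).image (fun i : ℕ => c + (i : ZMod p))

lemma itv_eq_seg (x y : ZMod p) : itv x y = seg x ((y - x).val + 1) := rfl

lemma mem_seg_of_lt {c : ZMod p} {m k : ℕ} (hk : k < m) : c + (k : ZMod p) ∈ seg c m :=
  mem_image.2 ⟨k, mem_range.2 hk, rfl⟩

lemma mem_seg [NeZero p] {c w : ZMod p} {m : ℕ} : w ∈ seg c m ↔ (w - c).val < m := by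
  constructor
  · intro h
    simp only [seg, mem_image, mem_range] at h
    obtain ⟨i, hi, rfl⟩ := h
    have h2 : c + (i : ZMod p) - c = (i : ZMod p) := by ring
    rw [h2, ZMod.val_natCast]
    exact lt_of_le_of_lt (Nat.mod_le _ _) hi
  · intro h
    have := mem_seg_of_lt (c := c) h
    rwa [ZMod.natCast_zmod_val, add_sub_cancel] at this

lemma seg_card {c : ZMod p} {m : ℕ} (h : m ≤ p) : (seg c m).card = m := by
  rw [seg, card_image_of_injOn, card_range]
  intro i hi j hj hij
  simp only [mem_coe, mem_range] at hi hj
  have : (i : ZMod p) = (j : ZMod p) := add_left_cancel hij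
  have hv := congrArg ZMod.val this
  rwa [ZMod.val_natCast, ZMod.val_natCast, Nat.mod_eq_of_lt (lt_of_lt_of_le hi h),
    Nat.mod_eq_of_lt (lt_of_lt_of_le hj h)] at hv

lemma seg_eq_univ [NeZero p] {c : ZMod p} {m : ℕ} (h : p ≤ m) : seg c m = univ := by
  ext w
  simp only [mem_univ, iff_true, mem_seg]
  exact lt_of_lt_of_le (ZMod.val_lt _) h

lemma seg_mono {c : ZMod p} {m m' : ℕ} (h : m ≤ m') : seg c m ⊆ seg c m' :=
  image_subset_image (range_subset_range.2 h)

lemma seg_add_seg {c d : ZMod p} {m l : ℕ} (hm : 1 ≤ m) (hl : 1 ≤ l) :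
    seg c m + seg d l = seg (c + d) (m + l - 1) := by
  ext w
  simp only [Finset.mem_add]
  constructor
  · rintro ⟨a, ha, b, hb, rfl⟩
    simp only [seg, mem_image, mem_range] at ha hb
    obtain ⟨i, hi, rfl⟩ := ha
    obtain ⟨j, hj, rfl⟩ := hb
    refine mem_image.2 ⟨i + j, mem_range.2 (by omega), by push_cast; ring⟩
  · intro hw
    simp only [seg, mem_image, mem_range] at hw
    obtain ⟨k, hk, rfl⟩ := hw
    refine ⟨c + ((min k (m - 1) : ℕ) : ZMod p), mem_seg_of_lt (by omega),
      d + ((k - min k (m - 1) : ℕ) : ZMod p), mem_seg_of_lt (by omega), ?_⟩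
    have hk2 : (min k (m-1)) + (k - min k (m-1)) = k := by omega
    have : ((min k (m-1) : ℕ) : ZMod p) + ((k - min k (m-1) : ℕ) : ZMod p) = (k : ZMod p) := by
      rw [← Nat.cast_add, hk2]
    rw [← this]; ring

section Smul

lemma smul_eq_image (r : ZMod p) (S : Finset (ZMod p)) : r • S = S.image (r * ·) := rfl

lemma card_smul {r : ZMod p} (hp : p.Prime) (hr : r ≠ 0) (S : Finset (ZMod p)) :
    (r • S).card = S.card := by
  haveI : Fact p.Prime := ⟨hp⟩
  rw [smul_eq_image, card_image_of_injective _ (mul_right_injective₀ hr)]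

lemma smul_add_smul (r : ZMod p) (A B : Finset (ZMod p)) :
    r • A + r • B = r • (A + B) := by
  ext w
  simp only [Finset.mem_add, smul_eq_image, mem_image]
  constructor
  · rintro ⟨a', ⟨a, ha, rfl⟩, b', ⟨b, hb, rfl⟩, rfl⟩
    exact ⟨a + b, ⟨a, ha, b, hb, rfl⟩, by ring⟩
  · rintro ⟨w', ⟨a, ha, b, hb, rfl⟩, rfl⟩
    exact ⟨r * a, ⟨a, ha, rfl⟩, r * b, ⟨b, hb, rfl⟩, by ring⟩

lemma biUnion_smul {n : ℕ} (r : ZMod p) (f : Fin n → Finset (ZMod p)) :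
    (Finset.univ.biUnion fun i => r • f i) = r • Finset.univ.biUnion f := by
  simp only [smul_eq_image]
  exact biUnion_image.symm

lemma disjoint_of_smul_disjoint {r : ZMod p} {S T : Finset (ZMod p)}
    (h : Disjoint (r • S) (r • T)) : Disjoint S T := by
  rw [Finset.disjoint_left] at h ⊢
  intro w hS hT
  exact h (smul_mem_smul_finset hS) (smul_mem_smul_finset hT)

end Smul

section Linearize

lemma val_add_one_of_ne [NeZero p] {w : ZMod p} (h : w + 1 ≠ 0) : (w + 1).val = w.val + 1 := by
  have hval := ZMod.val_lt w
  rcases Nat.lt_or_ge (w.val + 1) p with h1 | h1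
  · have : w + 1 = ((w.val + 1 : ℕ) : ZMod p) := by
      push_cast [ZMod.natCast_zmod_val]; ring
    rw [this, ZMod.val_cast_of_lt h1]
  · have hp : w.val + 1 = p := by omega
    exfalso
    apply h
    have : w + 1 = ((w.val + 1 : ℕ) : ZMod p) := by
      push_cast [ZMod.natCast_zmod_val]; ring
    rw [this, hp, ZMod.natCast_self]

lemma val_add_cast [NeZero p] {w : ZMod p} {k : ℕ} (h : w.val + k < p) :
    (w + (k : ZMod p)).val = w.val + k := by
  have : w + (k : ZMod p) = ((w.val + k : ℕ) : ZMod p) := by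
    push_cast [ZMod.natCast_zmod_val]; ring
  rw [this, ZMod.val_cast_of_lt h]

variable [NeZero p] {z : ZMod p}

lemma f_step {c : ZMod p} {m : ℕ} (hz : z ∉ seg c m) :
    ∀ k, k < m → (c + (k : ZMod p) - z).val = (c - z).val + k := by
  intro k
  induction k with
  | zero => simp
  | succ k ih =>
    intro hk
    have ih' := ih (by omega)
    have hne : c + ((k + 1 : ℕ) : ZMod p) ≠ z := fun h => hz (h ▸ mem_seg_of_lt hk)
    have heq : c + ((k + 1 : ℕ) : ZMod p) - z = (c + (k : ZMod p) - z) + 1 := by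
      push_cast; ring
    have hne0 : c + (k : ZMod p) - z + 1 ≠ 0 := by
      intro h0
      exact hne (sub_eq_zero.1 (heq.trans h0))
    rw [heq, val_add_one_of_ne hne0, ih']
    omega

lemma image_f_seg {c : ZMod p} {m : ℕ} (hz : z ∉ seg c m) (hm : 1 ≤ m) :
    (seg c m).image (fun w => (w - z).val)
      = Finset.Icc ((c - z).val) ((c - z).val + (m - 1)) := by
  ext t
  simp only [mem_image, Finset.mem_Icc]
  constructor
  · rintro ⟨w, hw, rfl⟩
    simp only [seg, mem_image, mem_range] at hw
    obtain ⟨k, hk, rfl⟩ := hw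
    rw [f_step hz k hk]
    omega
  · rintro ⟨h1, h2⟩
    refine ⟨c + ((t - (c - z).val : ℕ) : ZMod p), mem_seg_of_lt (by omega), ?_⟩
    rw [f_step hz _ (by omega)]
    omega

end Linearize

section NatMain

lemma nat_main (n b : ℕ) (hb : 1 ≤ b) (hn : 1 ≤ n) (s a : Fin n → ℕ)
    (hdisj : ∀ i j, i ≠ j →
      Disjoint (Finset.Icc (s i) (s i + a i)) (Finset.Icc (s j) (s j + a j)))
    (hnext : ∀ i j, i ≠ j → s i + a i + 1 ∉ Finset.Icc (s j) (s j + a j)) :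
    (Finset.univ.biUnion fun i => Finset.Icc (s i) (s i + a i)).card + (n - 1) + b
      ≤ (Finset.univ.biUnion fun i : Fin n => Finset.Icc (s i) (s i + a i + b)).card := by
  haveI : Nonempty (Fin n) := ⟨⟨0, hn⟩⟩
  obtain ⟨i0, -, hi0⟩ := Finset.exists_max_image Finset.univ (fun i => s i + a i)
    Finset.univ_nonempty
  set A : Finset ℕ := Finset.univ.biUnion fun i => Finset.Icc (s i) (s i + a i) with hA
  set E : Finset ℕ := (Finset.univ.erase i0).image (fun j => s j + a j + 1) with hE
  set C : Finset ℕ := Finset.Icc (s i0 + a i0 + 1) (s i0 + a i0 + b) with hC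
  have hends : ∀ i j, i ≠ j → s i + a i ≠ s j + a j := by
    intro i j hij h
    have h1 : s i + a i ∈ Finset.Icc (s i) (s i + a i) := Finset.mem_Icc.2 (by omega)
    have h2 : s i + a i ∈ Finset.Icc (s j) (s j + a j) := Finset.mem_Icc.2 (by omega)
    exact (Finset.disjoint_left.1 (hdisj i j hij)) h1 h2
  have hstrict : ∀ j, j ≠ i0 → s j + a j < s i0 + a i0 := by
    intro j hj
    exact lt_of_le_of_ne (hi0 j (Finset.mem_univ j)) (hends j i0 hj)
  have hmax : ∀ w ∈ A, w ≤ s i0 + a i0 := by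
    intro w hw
    obtain ⟨i, -, hi⟩ := Finset.mem_biUnion.1 hw
    have := (Finset.mem_Icc.1 hi).2
    exact le_trans this (hi0 i (Finset.mem_univ i))
  have hEnotA : ∀ e ∈ E, e ∉ A := by
    intro e he
    obtain ⟨j, hj, rfl⟩ := Finset.mem_image.1 he
    intro hcA
    obtain ⟨k, -, hk⟩ := Finset.mem_biUnion.1 hcA
    rcases eq_or_ne j k with rfl | hjk
    · have := Finset.mem_Icc.1 hk; omega
    · exact hnext j k hjk hk
  have hdAE : Disjoint A E := Finset.disjoint_right.2 hEnotA
  have hdAC : Disjoint A C := by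
    rw [Finset.disjoint_left]
    intro w hw hwC
    have h1 := hmax w hw
    have h2 := (Finset.mem_Icc.1 hwC).1
    omega
  have hdEC : Disjoint E C := by
    rw [Finset.disjoint_left]
    intro w hw hwC
    obtain ⟨j, hj, rfl⟩ := Finset.mem_image.1 hw
    have hj' : j ≠ i0 := (Finset.mem_erase.1 hj).1
    have := hstrict j hj'
    have h2 := (Finset.mem_Icc.1 hwC).1
    omega
  have hcardE : E.card = n - 1 := by
    rw [hE, Finset.card_image_of_injOn, Finset.card_erase_of_mem (Finset.mem_univ i0),
      Finset.card_univ, Fintype.card_fin]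
    intro i hi j hj hij
    simp only at hij
    by_contra hne
    exact hends i j hne (by omega)
  have hcardC : C.card = b := by rw [hC, Nat.card_Icc]; omega
  have hsub : A ∪ E ∪ C ⊆ Finset.univ.biUnion fun i : Fin n => Finset.Icc (s i) (s i + a i + b) := by
    intro w hw
    rcases Finset.mem_union.1 hw with hw | hw
    · rcases Finset.mem_union.1 hw with hw | hw
      · obtain ⟨i, -, hi⟩ := Finset.mem_biUnion.1 hw
        refine Finset.mem_biUnion.2 ⟨i, Finset.mem_univ i, ?_⟩
        have := Finset.mem_Icc.1 hi
        exact Finset.mem_Icc.2 (by omega)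
      · obtain ⟨j, -, rfl⟩ := Finset.mem_image.1 hw
        exact Finset.mem_biUnion.2 ⟨j, Finset.mem_univ j, Finset.mem_Icc.2 (by omega)⟩
    · refine Finset.mem_biUnion.2 ⟨i0, Finset.mem_univ i0, ?_⟩
      have := Finset.mem_Icc.1 hw
      exact Finset.mem_Icc.2 (by omega)
  calc A.card + (n - 1) + b = (A ∪ E ∪ C).card := by
        rw [Finset.card_union_of_disjoint (Finset.disjoint_union_left.2 ⟨hdAC, hdEC⟩),
          Finset.card_union_of_disjoint hdAE, hcardE, hcardC]
    _ ≤ _ := Finset.card_le_card hsub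

end NatMain

section ZModFacts

variable [NeZero p]

lemma ext_eq {x y : ZMod p} (h : (y - x).val + 2 < p) :
    itv (x - 1) (y + 1) = seg (x - 1) ((y - x).val + 3) := by
  have heq : (y + 1 - (x - 1)) = (((y - x).val + 2 : ℕ) : ZMod p) := by
    push_cast [ZMod.natCast_zmod_val]; ring
  have h2 : (y + 1 - (x - 1)).val = (y - x).val + 2 := by
    rw [heq, ZMod.val_cast_of_lt h]
  rw [itv_eq_seg, h2]

lemma itv_subset_ext {x y : ZMod p} (h : (y - x).val + 2 < p) :
    itv x y ⊆ itv (x - 1) (y + 1) := by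
  rw [ext_eq h, itv_eq_seg]
  intro w hw
  rw [mem_seg] at hw ⊢
  have hw' : (w - x).val < (y - x).val + 1 := hw
  have h3 : w - (x - 1) = (w - x) + ((1 : ℕ) : ZMod p) := by push_cast; ring
  rw [h3, val_add_cast (by omega)]
  omega

lemma succ_mem_ext {x y : ZMod p} (h : (y - x).val + 2 < p) :
    y + 1 ∈ itv (x - 1) (y + 1) := by
  rw [ext_eq h]
  have h3 : y + 1 = (x - 1) + (((y - x).val + 2 : ℕ) : ZMod p) := by
    push_cast [ZMod.natCast_zmod_val]; ring
  rw [h3]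
  exact mem_seg_of_lt (by omega)

lemma itv_add_itv (x y u v : ZMod p) :
    itv x y + itv u v = seg (x + u) ((y - x).val + (v - u).val + 1) := by
  rw [itv_eq_seg, itv_eq_seg, seg_add_seg (by omega) (by omega)]
  congr 1
  omega

lemma biUnion_add {n : ℕ} (f : Fin n → Finset (ZMod p)) (t : Finset (ZMod p)) :
    (Finset.univ.biUnion f) + t = Finset.univ.biUnion (fun i => f i + t) := by
  ext w
  simp only [Finset.mem_add, Finset.mem_biUnion, Finset.mem_univ, true_and]
  constructor
  · rintro ⟨a, ⟨i, ha⟩, b, hb, rfl⟩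
    exact ⟨i, a, ha, b, hb, rfl⟩
  · rintro ⟨i, a, ha, b, hb, rfl⟩
    exact ⟨a, ⟨i, ha⟩, b, hb, rfl⟩

end ZModFacts

lemma image_add_seg (c u : ZMod p) (m : ℕ) :
    (seg c m).image (fun w => w + u) = seg (c + u) m := by
  simp only [seg, Finset.image_image]
  apply Finset.image_congr
  intro k _
  simp only [Function.comp_apply]
  ring

end StmtAux

theorem stmt_5 (p n : ℕ) (hp : p.Prime) (hn : 1 ≤ n)
    (x y : Fin n → ZMod p) (r : ZMod p) (hr : r ≠ 0)
    (hdisj : ∀ i j, i ≠ j → Disjoint (r • itv (x i) (y i)) (r • itv (x j - 1) (y j + 1)))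
    (u v : ZMod p) (huv : 2 ≤ (itv u v).card) :
    min p ((Finset.univ.biUnion fun i => r • itv (x i) (y i)).card + (itv u v).card + n - 2)
      ≤ ((Finset.univ.biUnion fun i => r • itv (x i) (y i)) + r • itv u v).card := by
  haveI : Fact p.Prime := ⟨hp⟩
  haveI : NeZero p := ⟨hp.ne_zero⟩
  classical
  set a : Fin n → ℕ := fun i => (y i - x i).val with hadef
  set b : ℕ := (v - u).val with hbdef
  have hbp : b < p := ZMod.val_lt _
  have hcard_uv : (itv u v).card = b + 1 := by
    rw [StmtAux.itv_eq_seg]; exact StmtAux.seg_card (by omega)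
  have hb : 1 ≤ b := by omega
  -- strip the scaling by r
  have hset : (Finset.univ.biUnion fun i => r • itv (x i) (y i)) + r • itv u v
      = r • ((Finset.univ.biUnion fun i => itv (x i) (y i)) + itv u v) := by
    rw [StmtAux.biUnion_smul, StmtAux.smul_add_smul]
  have hcardX : (Finset.univ.biUnion fun i => r • itv (x i) (y i)).card
      = (Finset.univ.biUnion fun i => itv (x i) (y i)).card := by
    rw [StmtAux.biUnion_smul, StmtAux.card_smul hp hr]
  rw [hset, StmtAux.card_smul hp hr, hcardX, hcard_uv]
  -- express the sumset as a union of segments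
  have hsum : (Finset.univ.biUnion fun i => itv (x i) (y i)) + itv u v
      = Finset.univ.biUnion fun i => StmtAux.seg (x i + u) (a i + b + 1) := by
    rw [StmtAux.biUnion_add]
    exact Finset.biUnion_congr rfl fun i _ => StmtAux.itv_add_itv (x i) (y i) u v
  rw [hsum]
  by_cases hTu : (Finset.univ.biUnion fun i => StmtAux.seg (x i + u) (a i + b + 1))
      = Finset.univ
  · rw [hTu, Finset.card_univ, ZMod.card]
    exact min_le_left _ _
  · obtain ⟨z, hz⟩ : ∃ z, z ∉ Finset.univ.biUnion
        fun i => StmtAux.seg (x i + u) (a i + b + 1) := by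
      by_contra h
      push_neg at h
      exact hTu (Finset.eq_univ_iff_forall.2 h)
    have hzJ : ∀ i, z ∉ StmtAux.seg (x i + u) (a i + b + 1) := fun i hzi =>
      hz (Finset.mem_biUnion.2 ⟨i, Finset.mem_univ i, hzi⟩)
    have hap : ∀ i, a i + b + 1 < p := by
      intro i
      by_contra h
      push_neg at h
      exact hzJ i (by rw [StmtAux.seg_eq_univ h]; exact Finset.mem_univ z)
    set s : Fin n → ℕ := fun i => ((x i + u) - z).val with hs
    have hfinj : Function.Injective (fun w : ZMod p => (w - z).val) := by
      intro w w' h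
      exact sub_left_injective (ZMod.val_injective p h)
    have hgin : Function.Injective (fun w : ZMod p => ((w + u) - z).val) := by
      intro w w' h
      have h2 : w + u = w' + u := sub_left_injective (ZMod.val_injective p h)
      exact add_right_cancel h2
    have hzA : ∀ i, z ∉ StmtAux.seg (x i + u) (a i + 1) := fun i hzi =>
      hzJ i (StmtAux.seg_mono (by omega) hzi)
    have himJ : ∀ i, (StmtAux.seg (x i + u) (a i + b + 1)).image (fun w => (w - z).val)
        = Finset.Icc (s i) (s i + a i + b) := by
      intro i
      rw [StmtAux.image_f_seg (hzJ i) (by omega)]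
      have h2 : s i = ((x i + u) - z).val := rfl
      congr 1
      omega
    have himA : ∀ i, (StmtAux.seg (x i + u) (a i + 1)).image (fun w => (w - z).val)
        = Finset.Icc (s i) (s i + a i) := by
      intro i
      rw [StmtAux.image_f_seg (hzA i) (by omega)]
      have h2 : s i = ((x i + u) - z).val := rfl
      rw [← h2]
      norm_num
    have htrans : ∀ i, (itv (x i) (y i)).image (fun w => ((w + u) - z).val)
        = Finset.Icc (s i) (s i + a i) := by
      intro i
      have h1 : (itv (x i) (y i)).image (fun w => w + u)
          = StmtAux.seg (x i + u) (a i + 1) := by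
        rw [StmtAux.itv_eq_seg, StmtAux.image_add_seg]
      have h2 : (itv (x i) (y i)).image (fun w => ((w + u) - z).val)
          = ((itv (x i) (y i)).image (fun w => w + u)).image (fun w => (w - z).val) := by
        rw [Finset.image_image]
        rfl
      rw [h2, h1, himA i]
    have hcardT : (Finset.univ.biUnion fun i => StmtAux.seg (x i + u) (a i + b + 1)).card
        = (Finset.univ.biUnion fun i => Finset.Icc (s i) (s i + a i + b)).card := by
      rw [← Finset.card_image_of_injective _ hfinj, Finset.biUnion_image]
      exact congrArg Finset.card (Finset.biUnion_congr rfl fun i _ => himJ i)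
    have hcardX2 : (Finset.univ.biUnion fun i => itv (x i) (y i)).card
        = (Finset.univ.biUnion fun i => Finset.Icc (s i) (s i + a i)).card := by
      rw [← Finset.card_image_of_injective _ hgin, Finset.biUnion_image]
      exact congrArg Finset.card (Finset.biUnion_congr rfl fun i _ => htrans i)
    -- disjointness facts
    have hdisjI : ∀ i j, i ≠ j → Disjoint (itv (x i) (y i)) (itv (x j) (y j)) := by
      intro i j hij
      have h1 := StmtAux.disjoint_of_smul_disjoint (hdisj i j hij)
      refine h1.mono_right (StmtAux.itv_subset_ext ?_)
      have h2 := hap j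
      have h3 : a j = (y j - x j).val := rfl
      omega
    have hy1 : ∀ i j, i ≠ j → y i + 1 ∉ itv (x j) (y j) := by
      intro i j hij h
      have h1 := StmtAux.disjoint_of_smul_disjoint (hdisj j i hij.symm)
      refine (Finset.disjoint_left.1 h1) h (StmtAux.succ_mem_ext ?_)
      have h2 := hap i
      have h3 : a i = (y i - x i).val := rfl
      omega
    have hdisjN : ∀ i j, i ≠ j →
        Disjoint (Finset.Icc (s i) (s i + a i)) (Finset.Icc (s j) (s j + a j)) := by
      intro i j hij
      rw [← htrans i, ← htrans j]
      exact (Finset.disjoint_image hgin).2 (hdisjI i j hij)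
    have hnextN : ∀ i j, i ≠ j → s i + a i + 1 ∉ Finset.Icc (s j) (s j + a j) := by
      intro i j hij hmem
      have hyx : (a i : ZMod p) = y i - x i := ZMod.natCast_zmod_val _
      have hkey : ((y i + 1 + u) - z).val = s i + a i + 1 := by
        have h3 : y i + 1 + u = (x i + u) + ((a i + 1 : ℕ) : ZMod p) := by
          push_cast [hyx]; ring
        rw [h3, StmtAux.f_step (hzJ i) (a i + 1) (by omega)]
        rfl
      rw [← hkey, ← htrans j] at hmem
      obtain ⟨w, hw, hww⟩ := Finset.mem_image.1 hmem
      have h4 : w + u = y i + 1 + u := sub_left_injective (ZMod.val_injective p hww)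
      have h5 : w = y i + 1 := add_right_cancel h4
      exact hy1 i j hij (h5 ▸ hw)
    have hmain := StmtAux.nat_main n b hb hn s a hdisjN hnextN
    rw [hcardT, hcardX2]
    exact le_trans (le_trans (min_le_right _ _) (by omega)) hmain
end
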